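/- arXiv:2107.01690 — 2 statements merged into one kernel-verified Lean document; each statement's English description precedes it below -/
import Mathlib

section
/- Let a < b be real numbers, A = [a,a] and B = [b,b] the corresponding degenerate intervals, and let F : 𝕀_{[A,B]} → 𝕀ℝ be continuous with respect to the Moore metric d_M (note 𝕀_{[[a,a],[b,b]]} is exactly the set of closed subintervals of [a,b]). Then F is integrable and ∫_{[a,a]}^{[b,b]} F(X)dX = [∫_a^b f_l(x)dx, ∫_a^b f_r(x)dx], where f_l(x) = π₁ F([x,x]) and f_r(x) = π₂ F([x,x]); that is, the interval integral with degenerate limits reduces to the Moore–Yang integral of F over [a,b]. -/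
/-- `𝕀ℝ`: the set of nonempty closed bounded real intervals, identified with
pairs `(lo, hi) ∈ ℝ × ℝ` with `lo ≤ hi`.  The subtype order inherited from the
product order on `ℝ × ℝ` is exactly the Kulisch–Miranker order, and the
inherited metric (sup metric of `ℝ × ℝ`) is exactly the Moore metric `d_M`. -/
abbrev IR : Type := {p : ℝ × ℝ // p.1 ≤ p.2}

namespace IR

/-- Left endpoint projection `π₁`. -/
def lo (A : IR) : ℝ := A.val.1

/-- Right endpoint projection `π₂`. -/
def hi (A : IR) : ℝ := A.val.2

/-- The strict Kulisch–Miranker order `A ≪ B`. -/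
def sll (A B : IR) : Prop := lo A < lo B ∧ hi A < hi B

/-- The Moore metric `d_M`. -/
noncomputable def dM (A B : IR) : ℝ := max |lo B - lo A| |hi B - hi A|

/-- `𝕀_{[A,B]} = {X ∈ 𝕀ℝ : A ≤ X ≤ B}`. -/
def box (A B : IR) : Set IR := {X : IR | A ≤ X ∧ X ≤ B}

/-- The interval `[u,v]` (with a junk degenerate value if `u > v`). -/
noncomputable def mkI (u v : ℝ) : IR := if h : u ≤ v then ⟨(u, v), h⟩ else ⟨(u, u), le_rfl⟩

/-- The point `A + t(B - A)` on the segment from `A` to `B`. -/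
noncomputable def seg (A B : IR) (t : ℝ) : IR :=
  mkI (lo A + t * (lo B - lo A)) (hi A + t * (hi B - hi A))

/-- Componentwise infimum of a set of intervals, as a pair of reals. -/
noncomputable def infS (S : Set IR) : ℝ × ℝ := (sInf (lo '' S), sInf (hi '' S))

/-- Componentwise supremum of a set of intervals, as a pair of reals. -/
noncomputable def supS (S : Set IR) : ℝ × ℝ := (sSup (lo '' S), sSup (hi '' S))

/-- A partition `A = P₀ ≪ P₁ ≪ ⋯ ≪ P_N = B` of `𝕀_{[A,B]}`, described by its
parameters `0 = t₀ < t₁ < ⋯ < t_N = 1` (so that `P_k = A + t_k (B - A)`). -/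
structure Partition where
  n : ℕ
  npos : 0 < n
  t : ℕ → ℝ
  t0 : t 0 = 0
  tn : t n = 1
  mono : ∀ i < n, t i < t (i + 1)

/-- The set of parameters of a partition. -/
def Partition.pts (P : Partition) : Set ℝ := P.t '' Set.Iic P.n

/-- The set of points `P_k = A + t_k(B-A)` of a partition of `𝕀_{[A,B]}`. -/
noncomputable def Partition.ipts (A B : IR) (P : Partition) : Set IR :=
  (fun i => seg A B (P.t i)) '' Set.Iic P.n

/-- Lower Riemann sum `σ(F, 𝒫)` (as a pair of reals; interval sums are
componentwise and `λ • [u,v] = [λu, λv]` for the scalars `λ = d_M ≥ 0`). -/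
noncomputable def lowerSum (A B : IR) (F : IR → IR) (P : Partition) : ℝ × ℝ :=
  ∑ k ∈ Finset.range P.n,
    dM (seg A B (P.t k)) (seg A B (P.t (k + 1))) •
      infS (F '' box (seg A B (P.t k)) (seg A B (P.t (k + 1))))

/-- Upper Riemann sum `Σ(F, 𝒫)`. -/
noncomputable def upperSum (A B : IR) (F : IR → IR) (P : Partition) : ℝ × ℝ :=
  ∑ k ∈ Finset.range P.n,
    dM (seg A B (P.t k)) (seg A B (P.t (k + 1))) •
      supS (F '' box (seg A B (P.t k)) (seg A B (P.t (k + 1))))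

/-- The lower integral `∫̲_A^B F(X)dX`: componentwise supremum of the lower
Riemann sums over all partitions. -/
noncomputable def lowerInt (A B : IR) (F : IR → IR) : ℝ × ℝ :=
  (sSup (Set.range fun P : Partition => (lowerSum A B F P).1),
   sSup (Set.range fun P : Partition => (lowerSum A B F P).2))

/-- The upper integral `∫̄_A^B F(X)dX`: componentwise infimum of the upper
Riemann sums over all partitions. -/
noncomputable def upperInt (A B : IR) (F : IR → IR) : ℝ × ℝ :=
  (sInf (Set.range fun P : Partition => (upperSum A B F P).1),
   sInf (Set.range fun P : Partition => (upperSum A B F P).2))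

/-- `F` is bounded on `𝕀_{[A,B]}` (order bounded, equivalently metrically
bounded). -/
def BoundedOn (F : IR → IR) (A B : IR) : Prop :=
  ∃ C D : IR, ∀ X ∈ box A B, C ≤ F X ∧ F X ≤ D

end IR

namespace IR

/-- Degenerate interval `[x,x]`. -/
abbrev diagI (x : ℝ) : IR := ⟨(x, x), le_rfl⟩

lemma le_def' {X Y : IR} : X ≤ Y ↔ lo X ≤ lo Y ∧ hi X ≤ hi Y := Iff.rfl

lemma mem_box_iff {u v : ℝ} {X : IR} :
    X ∈ box (diagI u) (diagI v) ↔ (u ≤ lo X ∧ u ≤ hi X) ∧ (lo X ≤ v ∧ hi X ≤ v) := Iff.rfl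

lemma diag_mem_box {u v y : ℝ} (h1 : u ≤ y) (h2 : y ≤ v) :
    diagI y ∈ box (diagI u) (diagI v) := ⟨⟨h1, h1⟩, ⟨h2, h2⟩⟩

lemma seg_diag (a b t : ℝ) : seg (diagI a) (diagI b) t = diagI (a + t * (b - a)) := by
  simp [seg, mkI, diagI, lo, hi]

lemma dM_diag (u v : ℝ) : dM (diagI u) (diagI v) = |v - u| := by
  simp [dM, lo, hi]

lemma continuous_diagI : Continuous diagI :=
  Continuous.subtype_mk (continuous_id.prodMk continuous_id) _

lemma continuous_lo : Continuous lo := continuous_fst.comp continuous_subtype_val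

lemma continuous_hi : Continuous hi := continuous_snd.comp continuous_subtype_val

lemma isCompact_box (a b : ℝ) : IsCompact (box (diagI a) (diagI b)) := by
  rw [Topology.IsEmbedding.subtypeVal.isCompact_iff]
  have h : Subtype.val '' box (diagI a) (diagI b)
      = Set.Icc ((a, a) : ℝ × ℝ) (b, b) ∩ {p : ℝ × ℝ | p.1 ≤ p.2} := by
    ext p
    constructor
    · rintro ⟨X, hX, rfl⟩
      exact ⟨⟨hX.1, hX.2⟩, X.2⟩
    · rintro ⟨hp, hple⟩
      exact ⟨⟨p, hple⟩, ⟨hp.1, hp.2⟩, rfl⟩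
  rw [h]
  exact isCompact_Icc.inter_right (isClosed_le continuous_fst continuous_snd)

lemma Partition.t_mono (P : Partition) {i j : ℕ} (hij : i ≤ j) (hj : j ≤ P.n) :
    P.t i ≤ P.t j := by
  induction hij with
  | refl => exact le_rfl
  | @step m h ih =>
      exact le_trans (ih (by omega)) (le_of_lt (P.mono m (by omega)))

instance : Nonempty Partition :=
  ⟨⟨1, one_pos, fun i => (i : ℝ), by simp, by simp, fun i _ => by
    push_cast; exact lt_add_one _⟩⟩

/-- The point `x_k = a + t_k (b - a)`. -/
noncomputable def xp (a b : ℝ) (P : Partition) (k : ℕ) : ℝ := a + P.t k * (b - a)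

lemma segx (a b : ℝ) (P : Partition) (k : ℕ) :
    seg (diagI a) (diagI b) (P.t k) = diagI (xp a b P k) := seg_diag a b (P.t k)

noncomputable def LSum (a b : ℝ) (φ : IR → ℝ) (P : Partition) : ℝ :=
  ∑ k ∈ Finset.range P.n, (xp a b P (k + 1) - xp a b P k) *
    sInf (φ '' box (diagI (xp a b P k)) (diagI (xp a b P (k + 1))))

noncomputable def USum (a b : ℝ) (φ : IR → ℝ) (P : Partition) : ℝ :=
  ∑ k ∈ Finset.range P.n, (xp a b P (k + 1) - xp a b P k) *
    sSup (φ '' box (diagI (xp a b P k)) (diagI (xp a b P (k + 1))))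

lemma xp_mono {a b : ℝ} (hab : a ≤ b) (P : Partition) {i j : ℕ} (hij : i ≤ j) (hj : j ≤ P.n) :
    xp a b P i ≤ xp a b P j :=
  add_le_add_right (mul_le_mul_of_nonneg_right (P.t_mono hij hj) (by linarith)) a

lemma xp_zero (a b : ℝ) (P : Partition) : xp a b P 0 = a := by simp [xp, P.t0]

lemma xp_n (a b : ℝ) (P : Partition) : xp a b P P.n = b := by simp [xp, P.tn]

lemma xp_mem {a b : ℝ} (hab : a ≤ b) (P : Partition) {k : ℕ} (hk : k ≤ P.n) :
    a ≤ xp a b P k ∧ xp a b P k ≤ b := by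
  constructor
  · exact le_trans (le_of_eq (xp_zero a b P).symm) (xp_mono hab P (Nat.zero_le k) hk)
  · exact le_trans (xp_mono hab P hk le_rfl) (le_of_eq (xp_n a b P))

lemma boxk_subset {a b : ℝ} (hab : a ≤ b) (P : Partition) {k : ℕ} (hk : k + 1 ≤ P.n) :
    box (diagI (xp a b P k)) (diagI (xp a b P (k + 1))) ⊆ box (diagI a) (diagI b) := by
  intro X hX
  have h1 := (xp_mem hab P (Nat.le_of_succ_le hk)).1
  have h2 := (xp_mem hab P hk).2
  exact ⟨le_trans ⟨h1, h1⟩ hX.1, le_trans hX.2 ⟨h2, h2⟩⟩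

lemma continuousOn_g {a b : ℝ} {φ : IR → ℝ}
    (hφ : ContinuousOn φ (box (diagI a) (diagI b))) :
    ContinuousOn (fun y => φ (diagI y)) (Set.Icc a b) :=
  hφ.comp continuous_diagI.continuousOn fun _ hy => diag_mem_box hy.1 hy.2

lemma intable {a b : ℝ} (hab : a ≤ b) {φ : IR → ℝ}
    (hφ : ContinuousOn φ (box (diagI a) (diagI b))) (P : Partition)
    {k : ℕ} (hk : k < P.n) :
    IntervalIntegrable (fun y => φ (diagI y)) MeasureTheory.volume
      (xp a b P k) (xp a b P (k + 1)) := by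
  apply ((continuousOn_g hφ).mono ?_).intervalIntegrable
  rw [Set.uIcc_of_le (xp_mono hab P (Nat.le_succ k) hk)]
  exact Set.Icc_subset_Icc (xp_mem hab P hk.le).1 (xp_mem hab P hk).2

lemma telescope {a b : ℝ} (hab : a ≤ b) {φ : IR → ℝ}
    (hφ : ContinuousOn φ (box (diagI a) (diagI b))) (P : Partition) :
    ∑ k ∈ Finset.range P.n, ∫ y in (xp a b P k)..(xp a b P (k + 1)), φ (diagI y)
      = ∫ y in a..b, φ (diagI y) := by
  have h := intervalIntegral.sum_integral_adjacent_intervals (a := xp a b P)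
    (μ := MeasureTheory.volume) (fun k hk => intable hab hφ P hk)
  rw [h, xp_zero, xp_n]

lemma LSum_le_integral {a b : ℝ} (hab : a ≤ b) {φ : IR → ℝ}
    (hφ : ContinuousOn φ (box (diagI a) (diagI b))) (P : Partition) :
    LSum a b φ P ≤ ∫ x in a..b, φ (diagI x) := by
  rw [← telescope hab hφ P]
  apply Finset.sum_le_sum
  intro k hk
  rw [Finset.mem_range] at hk
  have hle : xp a b P k ≤ xp a b P (k + 1) := xp_mono hab P (Nat.le_succ k) hk
  set m := sInf (φ '' box (diagI (xp a b P k)) (diagI (xp a b P (k + 1)))) with hm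
  have hbb : BddBelow (φ '' box (diagI (xp a b P k)) (diagI (xp a b P (k + 1)))) :=
    (((isCompact_box a b).image_of_continuousOn hφ).bddBelow).mono
      (Set.image_mono (f := φ) (boxk_subset hab P hk))
  have hmle : ∀ y ∈ Set.Icc (xp a b P k) (xp a b P (k + 1)),
      (fun _ => m) y ≤ φ (diagI y) := fun y hy =>
    csInf_le hbb ⟨diagI y, diag_mem_box hy.1 hy.2, rfl⟩
  calc (xp a b P (k + 1) - xp a b P k) * m
      = ∫ _ in (xp a b P k)..(xp a b P (k + 1)), m := by
        rw [intervalIntegral.integral_const, smul_eq_mul]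
    _ ≤ ∫ y in (xp a b P k)..(xp a b P (k + 1)), φ (diagI y) :=
        intervalIntegral.integral_mono_on hle intervalIntegrable_const
          (intable hab hφ P hk) hmle

lemma integral_le_USum {a b : ℝ} (hab : a ≤ b) {φ : IR → ℝ}
    (hφ : ContinuousOn φ (box (diagI a) (diagI b))) (P : Partition) :
    (∫ x in a..b, φ (diagI x)) ≤ USum a b φ P := by
  rw [← telescope hab hφ P]
  apply Finset.sum_le_sum
  intro k hk
  rw [Finset.mem_range] at hk
  have hle : xp a b P k ≤ xp a b P (k + 1) := xp_mono hab P (Nat.le_succ k) hk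
  set m := sSup (φ '' box (diagI (xp a b P k)) (diagI (xp a b P (k + 1)))) with hm
  have hbb : BddAbove (φ '' box (diagI (xp a b P k)) (diagI (xp a b P (k + 1)))) :=
    (((isCompact_box a b).image_of_continuousOn hφ).bddAbove).mono
      (Set.image_mono (f := φ) (boxk_subset hab P hk))
  have hmle : ∀ y ∈ Set.Icc (xp a b P k) (xp a b P (k + 1)),
      φ (diagI y) ≤ (fun _ => m) y := fun y hy =>
    le_csSup hbb ⟨diagI y, diag_mem_box hy.1 hy.2, rfl⟩
  calc (∫ y in (xp a b P k)..(xp a b P (k + 1)), φ (diagI y))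
      ≤ ∫ _ in (xp a b P k)..(xp a b P (k + 1)), m :=
        intervalIntegral.integral_mono_on hle (intable hab hφ P hk)
          intervalIntegrable_const hmle
    _ = (xp a b P (k + 1) - xp a b P k) * m := by
        rw [intervalIntegral.integral_const, smul_eq_mul]

lemma exists_partition {a b : ℝ} (hab : a < b) {φ : IR → ℝ}
    (hφ : ContinuousOn φ (box (diagI a) (diagI b))) {ε : ℝ} (hε : 0 < ε) :
    ∃ P : Partition, USum a b φ P ≤ LSum a b φ P + ε := by
  have hba : (0:ℝ) < b - a := by linarith
  have huc := (isCompact_box a b).uniformContinuousOn_of_continuous hφ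
  rw [Metric.uniformContinuousOn_iff] at huc
  obtain ⟨δ, hδ, hucδ⟩ := huc (ε / (b - a)) (div_pos hε hba)
  obtain ⟨N, hN⟩ := exists_nat_gt ((b - a) / δ)
  have hNpos : 0 < N := by
    have h1 : (0:ℝ) < (b - a) / δ := div_pos hba hδ
    have h2 : (0:ℝ) < (N:ℝ) := lt_trans h1 hN
    exact_mod_cast h2
  have hNR : (0:ℝ) < (N:ℝ) := Nat.cast_pos.mpr hNpos
  have hmesh : (b - a) / N < δ := by
    rw [div_lt_iff₀ hNR]
    rw [div_lt_iff₀ hδ] at hN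
    linarith
  obtain ⟨P, hPn, hPt⟩ : ∃ P : Partition, P.n = N ∧ P.t = fun i : ℕ => (i : ℝ) / N := by
    refine ⟨⟨N, hNpos, fun i => (i : ℝ) / N, by simp, by field_simp, fun i _ => ?_⟩, rfl, rfl⟩
    have hi : (i : ℝ) < ((i + 1 : ℕ) : ℝ) := by push_cast; linarith
    exact (div_lt_div_iff_of_pos_right hNR).mpr hi
  have hdiff : ∀ k : ℕ, xp a b P (k + 1) - xp a b P k = (b - a) / N := by
    intro k
    rw [xp, xp, hPt]
    push_cast
    field_simp
    ring
  have hosc : ∀ k, k < P.n →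
      sSup (φ '' box (diagI (xp a b P k)) (diagI (xp a b P (k + 1))))
        ≤ sInf (φ '' box (diagI (xp a b P k)) (diagI (xp a b P (k + 1)))) + ε / (b - a) := by
    intro k hk
    have hle : xp a b P k ≤ xp a b P (k + 1) := xp_mono hab.le P (Nat.le_succ k) hk
    have hne : (φ '' box (diagI (xp a b P k)) (diagI (xp a b P (k + 1)))).Nonempty :=
      ⟨φ (diagI (xp a b P k)), ⟨diagI (xp a b P k), diag_mem_box le_rfl hle, rfl⟩⟩
    apply csSup_le hne
    rintro u ⟨X, hX, rfl⟩
    rw [← sub_le_iff_le_add]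
    apply le_csInf hne
    rintro v ⟨Y, hY, rfl⟩
    have hXb := boxk_subset hab.le P hk hX
    have hYb := boxk_subset hab.le P hk hY
    rw [mem_box_iff] at hX hY
    obtain ⟨⟨hx1, hx2⟩, hx3, hx4⟩ := hX
    obtain ⟨⟨hy1, hy2⟩, hy3, hy4⟩ := hY
    have hdd : xp a b P (k + 1) - xp a b P k < δ := by
      rw [hdiff k]; exact hmesh
    have hdist : dist X Y < δ := by
      rw [Subtype.dist_eq, Prod.dist_eq]
      have h1 : dist X.val.1 Y.val.1 < δ := by
        rw [Real.dist_eq]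
        refine lt_of_le_of_lt ?_ hdd
        rw [abs_sub_le_iff]
        constructor <;> [skip; skip] <;>
          simp only [show X.val.1 = lo X from rfl, show Y.val.1 = lo Y from rfl] <;> linarith
      have h2 : dist X.val.2 Y.val.2 < δ := by
        rw [Real.dist_eq]
        refine lt_of_le_of_lt ?_ hdd
        rw [abs_sub_le_iff]
        constructor <;>
          simp only [show X.val.2 = hi X from rfl, show Y.val.2 = hi Y from rfl] <;> linarith
      exact max_lt h1 h2
    have h := hucδ X hXb Y hYb hdist
    rw [Real.dist_eq] at h
    have h' := abs_lt.mp h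
    linarith [h'.1, h'.2]
  refine ⟨P, ?_⟩
  have hsum : USum a b φ P - LSum a b φ P ≤ ε := by
    rw [USum, LSum, ← Finset.sum_sub_distrib]
    have hbound : ∀ k ∈ Finset.range P.n,
        (xp a b P (k + 1) - xp a b P k) *
            sSup (φ '' box (diagI (xp a b P k)) (diagI (xp a b P (k + 1)))) -
          (xp a b P (k + 1) - xp a b P k) *
            sInf (φ '' box (diagI (xp a b P k)) (diagI (xp a b P (k + 1)))) ≤ ε / N := by
      intro k hk
      rw [Finset.mem_range] at hk
      rw [← mul_sub, hdiff k]
      have h := hosc k hk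
      calc (b - a) / N *
            (sSup (φ '' box (diagI (xp a b P k)) (diagI (xp a b P (k + 1)))) -
              sInf (φ '' box (diagI (xp a b P k)) (diagI (xp a b P (k + 1)))))
          ≤ (b - a) / N * (ε / (b - a)) := by
            apply mul_le_mul_of_nonneg_left (by linarith) (by positivity)
        _ = ε / N := by field_simp
    calc (∑ k ∈ Finset.range P.n,
          ((xp a b P (k + 1) - xp a b P k) *
              sSup (φ '' box (diagI (xp a b P k)) (diagI (xp a b P (k + 1)))) -
            (xp a b P (k + 1) - xp a b P k) *
              sInf (φ '' box (diagI (xp a b P k)) (diagI (xp a b P (k + 1))))))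
        ≤ ∑ _k ∈ Finset.range P.n, ε / N := Finset.sum_le_sum hbound
      _ = ε := by
          rw [Finset.sum_const, Finset.card_range, hPn, nsmul_eq_mul]
          field_simp
  linarith

lemma rawL_eq {a b : ℝ} (hab : a ≤ b) (φ : IR → ℝ) (P : Partition) :
    (∑ k ∈ Finset.range P.n,
      dM (seg (diagI a) (diagI b) (P.t k)) (seg (diagI a) (diagI b) (P.t (k + 1))) *
        sInf (φ '' box (seg (diagI a) (diagI b) (P.t k)) (seg (diagI a) (diagI b) (P.t (k + 1)))))
      = LSum a b φ P := by
  apply Finset.sum_congr rfl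
  intro k hk
  rw [Finset.mem_range] at hk
  rw [segx, segx, dM_diag,
    abs_of_nonneg (sub_nonneg.mpr (xp_mono hab P (Nat.le_succ k) hk))]

lemma rawU_eq {a b : ℝ} (hab : a ≤ b) (φ : IR → ℝ) (P : Partition) :
    (∑ k ∈ Finset.range P.n,
      dM (seg (diagI a) (diagI b) (P.t k)) (seg (diagI a) (diagI b) (P.t (k + 1))) *
        sSup (φ '' box (seg (diagI a) (diagI b) (P.t k)) (seg (diagI a) (diagI b) (P.t (k + 1)))))
      = USum a b φ P := by
  apply Finset.sum_congr rfl
  intro k hk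
  rw [Finset.mem_range] at hk
  rw [segx, segx, dM_diag,
    abs_of_nonneg (sub_nonneg.mpr (xp_mono hab P (Nat.le_succ k) hk))]

lemma key {a b : ℝ} (hab : a < b) (φ : IR → ℝ)
    (hφ : ContinuousOn φ (box (diagI a) (diagI b))) :
    sSup (Set.range (LSum a b φ)) = ∫ x in a..b, φ (diagI x) ∧
    sInf (Set.range (USum a b φ)) = ∫ x in a..b, φ (diagI x) := by
  set I := ∫ x in a..b, φ (diagI x) with hI
  have hA : ∀ P, LSum a b φ P ≤ I := LSum_le_integral hab.le hφ
  have hB : ∀ P, I ≤ USum a b φ P := integral_le_USum hab.le hφ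
  have hbddL : BddAbove (Set.range (LSum a b φ)) := by
    refine ⟨I, ?_⟩; rintro _ ⟨P, rfl⟩; exact hA P
  have hbddU : BddBelow (Set.range (USum a b φ)) := by
    refine ⟨I, ?_⟩; rintro _ ⟨P, rfl⟩; exact hB P
  constructor
  · apply le_antisymm
    · apply csSup_le (Set.range_nonempty _)
      rintro _ ⟨P, rfl⟩; exact hA P
    · apply le_of_forall_pos_le_add
      intro ε hε
      obtain ⟨P, hP⟩ := exists_partition hab hφ hε
      calc I ≤ USum a b φ P := hB P
        _ ≤ LSum a b φ P + ε := hP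
        _ ≤ sSup (Set.range (LSum a b φ)) + ε := by
            have := le_csSup hbddL ⟨P, rfl⟩
            linarith
  · apply le_antisymm
    · apply le_of_forall_pos_le_add
      intro ε hε
      obtain ⟨P, hP⟩ := exists_partition hab hφ hε
      calc sInf (Set.range (USum a b φ)) ≤ USum a b φ P := csInf_le hbddU ⟨P, rfl⟩
        _ ≤ LSum a b φ P + ε := hP
        _ ≤ I + ε := by have := hA P; linarith
    · apply le_csInf (Set.range_nonempty _)
      rintro _ ⟨P, rfl⟩; exact hB P

lemma lowerSum_fst {a b : ℝ} (hab : a ≤ b) (F : IR → IR) (P : Partition) :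
    (lowerSum (diagI a) (diagI b) F P).1 = LSum a b (fun X => lo (F X)) P := by
  rw [← rawL_eq hab, lowerSum, Prod.fst_sum]
  apply Finset.sum_congr rfl
  intro k _
  rw [Prod.smul_fst, smul_eq_mul]
  congr 1
  show sInf (lo '' (F '' _)) = _
  rw [Set.image_image]

lemma lowerSum_snd {a b : ℝ} (hab : a ≤ b) (F : IR → IR) (P : Partition) :
    (lowerSum (diagI a) (diagI b) F P).2 = LSum a b (fun X => hi (F X)) P := by
  rw [← rawL_eq hab, lowerSum, Prod.snd_sum]
  apply Finset.sum_congr rfl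
  intro k _
  rw [Prod.smul_snd, smul_eq_mul]
  congr 1
  show sInf (hi '' (F '' _)) = _
  rw [Set.image_image]

lemma upperSum_fst {a b : ℝ} (hab : a ≤ b) (F : IR → IR) (P : Partition) :
    (upperSum (diagI a) (diagI b) F P).1 = USum a b (fun X => lo (F X)) P := by
  rw [← rawU_eq hab, upperSum, Prod.fst_sum]
  apply Finset.sum_congr rfl
  intro k _
  rw [Prod.smul_fst, smul_eq_mul]
  congr 1
  show sSup (lo '' (F '' _)) = _
  rw [Set.image_image]

lemma upperSum_snd {a b : ℝ} (hab : a ≤ b) (F : IR → IR) (P : Partition) :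
    (upperSum (diagI a) (diagI b) F P).2 = USum a b (fun X => hi (F X)) P := by
  rw [← rawU_eq hab, upperSum, Prod.snd_sum]
  apply Finset.sum_congr rfl
  intro k _
  rw [Prod.smul_snd, smul_eq_mul]
  congr 1
  show sSup (hi '' (F '' _)) = _
  rw [Set.image_image]

end IR

open IR in
/-- Let `a < b`, and let `A = [a,a]`, `B = [b,b]` be the corresponding
degenerate intervals (so `𝕀_{[A,B]}` is the set of closed subintervals of
`[a,b]`).  If `F : 𝕀_{[A,B]} → 𝕀ℝ` is continuous w.r.t. the Moore metric, then
`F` is integrable and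
`∫_{[a,a]}^{[b,b]} F = [∫_a^b f_l, ∫_a^b f_r]` where `f_l(x) = π₁F([x,x])` and
`f_r(x) = π₂F([x,x])`; i.e. the interval integral with degenerate limits is
the Moore–Yang integral of `F` over `[a,b]`. -/
theorem IR.degenerate_limits (a b : ℝ) (hab : a < b) (F : IR → IR)
    (hF : ContinuousOn F (box ⟨(a, a), le_rfl⟩ ⟨(b, b), le_rfl⟩)) :
    lowerInt ⟨(a, a), le_rfl⟩ ⟨(b, b), le_rfl⟩ F =
      upperInt ⟨(a, a), le_rfl⟩ ⟨(b, b), le_rfl⟩ F ∧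
    lowerInt ⟨(a, a), le_rfl⟩ ⟨(b, b), le_rfl⟩ F =
      ((∫ x in a..b, lo (F ⟨(x, x), le_rfl⟩)),
       (∫ x in a..b, hi (F ⟨(x, x), le_rfl⟩))) := by
  have hF' : ContinuousOn F (box (diagI a) (diagI b)) := hF
  have hφl : ContinuousOn (fun X => lo (F X)) (box (diagI a) (diagI b)) :=
    continuous_lo.comp_continuousOn hF'
  have hφh : ContinuousOn (fun X => hi (F X)) (box (diagI a) (diagI b)) :=
    continuous_hi.comp_continuousOn hF'
  have k1 := key hab _ hφl
  have k2 := key hab _ hφh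
  have eL1 : (fun P : Partition => (lowerSum (diagI a) (diagI b) F P).1)
      = LSum a b (fun X => lo (F X)) := funext fun P => lowerSum_fst hab.le F P
  have eL2 : (fun P : Partition => (lowerSum (diagI a) (diagI b) F P).2)
      = LSum a b (fun X => hi (F X)) := funext fun P => lowerSum_snd hab.le F P
  have eU1 : (fun P : Partition => (upperSum (diagI a) (diagI b) F P).1)
      = USum a b (fun X => lo (F X)) := funext fun P => upperSum_fst hab.le F P
  have eU2 : (fun P : Partition => (upperSum (diagI a) (diagI b) F P).2)
      = USum a b (fun X => hi (F X)) := funext fun P => upperSum_snd hab.le F P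
  constructor
  · show (sSup (Set.range fun P : Partition => (lowerSum (diagI a) (diagI b) F P).1),
          sSup (Set.range fun P : Partition => (lowerSum (diagI a) (diagI b) F P).2))
        = (sInf (Set.range fun P : Partition => (upperSum (diagI a) (diagI b) F P).1),
           sInf (Set.range fun P : Partition => (upperSum (diagI a) (diagI b) F P).2))
    rw [Prod.mk.injEq]
    constructor
    · rw [eL1, eU1, k1.1, k1.2]
    · rw [eL2, eU2, k2.1, k2.2]
  · show (sSup (Set.range fun P : Partition => (lowerSum (diagI a) (diagI b) F P).1),
          sSup (Set.range fun P : Partition => (lowerSum (diagI a) (diagI b) F P).2))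
        = ((∫ x in a..b, lo (F ⟨(x, x), le_rfl⟩)), (∫ x in a..b, hi (F ⟨(x, x), le_rfl⟩)))
    rw [Prod.mk.injEq]
    constructor
    · rw [eL1]; exact k1.1
    · rw [eL2]; exact k2.1
end

section
/- (Moore–Yang characterization theorem) Let a < b be real numbers and let F : {X ∈ 𝕀ℝ : X ⊆ [a,b]} → 𝕀ℝ be continuous with respect to the Moore metric d_M and inclusion monotonic (X ⊆ Y implies F(X) ⊆ F(Y)). For a partition T = {a = x₀ < x₁ < ⋯ < x_n = b} of [a,b], let Σ(F,T) = Σ_{k=0}^{n−1} F([x_k,x_{k+1}])·(x_{k+1}−x_k), computed with interval arithmetic (so Σ(F,T) = [Σ_k π₁F([x_k,x_{k+1}])(x_{k+1}−x_k), Σ_k π₂F([x_k,x_{k+1}])(x_{k+1}−x_k)]). Then the intersection, taken over all partitions T of [a,b], of the sets Σ(F,T) ⊆ ℝ equals the interval [∫_a^b f_l(x)dx, ∫_a^b f_r(x)dx], where f_l(x) = π₁ F([x,x]) and f_r(x) = π₂ F([x,x]). -/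
/-- A partition `a = x₀ < x₁ < ⋯ < x_n = b` of the real interval `[a,b]`. -/
structure RChain (a b : ℝ) where
  n : ℕ
  npos : 0 < n
  x : ℕ → ℝ
  x0 : x 0 = a
  xn : x n = b
  mono : ∀ i < n, x i < x (i + 1)

/-- The Riemann sum `Σ(F,T) = Σ_k F([x_k,x_{k+1}])·(x_{k+1}−x_k)` computed with
interval arithmetic, as a pair of endpoints. -/
noncomputable def mooreSum {a b : ℝ} (F : IR → IR) (T : RChain a b) : ℝ × ℝ :=
  ∑ k ∈ Finset.range T.n,
    (T.x (k + 1) - T.x k) • (F (IR.mkI (T.x k) (T.x (k + 1)))).val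

namespace MY
open IR

lemma mkI_val {u v : ℝ} (h : u ≤ v) : (mkI u v).val = (u, v) := by
  simp [mkI, h]

lemma lo_mkI {u v : ℝ} (h : u ≤ v) : lo (mkI u v) = u := by
  simp [lo, mkI_val h]

lemma hi_mkI {u v : ℝ} (h : u ≤ v) : hi (mkI u v) = v := by
  simp [hi, mkI_val h]

lemma chain_le {a b : ℝ} (T : RChain a b) :
    ∀ j, j ≤ T.n → ∀ i, i ≤ j → T.x i ≤ T.x j := by
  intro j
  induction j with
  | zero => intro _ i hi; obtain rfl := Nat.le_zero.mp hi; exact le_rfl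
  | succ m ih =>
    intro hm i hi
    rcases Nat.eq_or_lt_of_le hi with h | h
    · exact h ▸ le_rfl
    · exact (ih (Nat.le_of_succ_le hm) i (Nat.lt_succ_iff.mp h)).trans
        (T.mono m (by omega)).le

lemma chain_a {a b : ℝ} (T : RChain a b) {k : ℕ} (hk : k ≤ T.n) : a ≤ T.x k := by
  have h := chain_le T k hk 0 (Nat.zero_le k); rw [T.x0] at h; exact h

lemma chain_b {a b : ℝ} (T : RChain a b) {k : ℕ} (hk : k ≤ T.n) : T.x k ≤ b := by
  have h := chain_le T T.n le_rfl k hk; rw [T.xn] at h; exact h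

lemma fst_mooreSum {a b : ℝ} (F : IR → IR) (T : RChain a b) :
    (mooreSum F T).1 = ∑ k ∈ Finset.range T.n,
      (T.x (k + 1) - T.x k) * lo (F (mkI (T.x k) (T.x (k + 1)))) := by
  rw [mooreSum, Prod.fst_sum]; rfl

lemma snd_mooreSum {a b : ℝ} (F : IR → IR) (T : RChain a b) :
    (mooreSum F T).2 = ∑ k ∈ Finset.range T.n,
      (T.x (k + 1) - T.x k) * hi (F (mkI (T.x k) (T.x (k + 1)))) := by
  rw [mooreSum, Prod.snd_sum]; rfl

lemma cont_fl {a b : ℝ} (F : IR → IR)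
    (hFc : ContinuousOn F {X : IR | a ≤ lo X ∧ hi X ≤ b}) :
    ContinuousOn (fun x : ℝ => lo (F (mkI x x))) (Set.Icc a b) ∧
    ContinuousOn (fun x : ℝ => hi (F (mkI x x))) (Set.Icc a b) := by
  have hmkd : ∀ x : ℝ, mkI x x = ⟨(x, x), le_rfl⟩ := fun x => by simp [mkI]
  have hdiag : Continuous (fun x : ℝ => (⟨(x, x), le_rfl⟩ : IR)) :=
    (continuous_id.prodMk continuous_id).subtype_mk _
  have hFd : ContinuousOn (fun x : ℝ => F (⟨(x, x), le_rfl⟩ : IR)) (Set.Icc a b) := by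
    refine hFc.comp hdiag.continuousOn ?_
    intro x hx
    exact ⟨hx.1, hx.2⟩
  have hloC : Continuous (lo : IR → ℝ) := continuous_fst.comp continuous_subtype_val
  have hhiC : Continuous (hi : IR → ℝ) := continuous_snd.comp continuous_subtype_val
  constructor
  · have h1 := hloC.comp_continuousOn hFd
    have h2 : (fun x : ℝ => lo (F (mkI x x)))
        = fun x : ℝ => lo (F (⟨(x, x), le_rfl⟩ : IR)) := funext fun x => by rw [hmkd x]
    rw [h2]; exact h1
  · have h1 := hhiC.comp_continuousOn hFd
    have h2 : (fun x : ℝ => hi (F (mkI x x)))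
        = fun x : ℝ => hi (F (⟨(x, x), le_rfl⟩ : IR)) := funext fun x => by rw [hmkd x]
    rw [h2]; exact h1

end MY

namespace MY
open IR MeasureTheory

lemma bounds {a b : ℝ} (hab : a ≤ b) (F : IR → IR)
    (hFc : ContinuousOn F {X : IR | a ≤ lo X ∧ hi X ≤ b})
    (hFm : ∀ X Y : IR, a ≤ lo X → hi X ≤ b → a ≤ lo Y → hi Y ≤ b →
      lo Y ≤ lo X → hi X ≤ hi Y → lo (F Y) ≤ lo (F X) ∧ hi (F X) ≤ hi (F Y))
    (T : RChain a b) :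
    (mooreSum F T).1 ≤ (∫ x in a..b, lo (F (mkI x x))) ∧
      (∫ x in a..b, hi (F (mkI x x))) ≤ (mooreSum F T).2 := by
  obtain ⟨hflC, hfrC⟩ := cont_fl F hFc
  have hflInt : ∀ u v : ℝ, a ≤ u → u ≤ v → v ≤ b →
      IntervalIntegrable (fun x : ℝ => lo (F (mkI x x))) volume u v :=
    fun u v hau huv hvb =>
      ContinuousOn.intervalIntegrable_of_Icc huv (hflC.mono (Set.Icc_subset_Icc hau hvb))
  have hfrInt : ∀ u v : ℝ, a ≤ u → u ≤ v → v ≤ b →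
      IntervalIntegrable (fun x : ℝ => hi (F (mkI x x))) volume u v :=
    fun u v hau huv hvb =>
      ContinuousOn.intervalIntegrable_of_Icc huv (hfrC.mono (Set.Icc_subset_Icc hau hvb))
  have hmono : ∀ (u v x : ℝ), a ≤ u → u ≤ x → x ≤ v → v ≤ b →
      lo (F (mkI u v)) ≤ lo (F (mkI x x)) ∧ hi (F (mkI x x)) ≤ hi (F (mkI u v)) := by
    intro u v x hau hux hxv hvb
    have huv : u ≤ v := hux.trans hxv
    exact hFm (mkI x x) (mkI u v)
      (by rw [lo_mkI le_rfl]; exact hau.trans hux)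
      (by rw [hi_mkI le_rfl]; exact hxv.trans hvb)
      (by rw [lo_mkI huv]; exact hau)
      (by rw [hi_mkI huv]; exact hvb)
      (by rw [lo_mkI le_rfl, lo_mkI huv]; exact hux)
      (by rw [hi_mkI le_rfl, hi_mkI huv]; exact hxv)
  have hsplit1 : ∑ k ∈ Finset.range T.n, ∫ x in T.x k..T.x (k+1), lo (F (mkI x x))
      = ∫ x in a..b, lo (F (mkI x x)) := by
    rw [intervalIntegral.sum_integral_adjacent_intervals
      (fun k hk => hflInt _ _ (chain_a T hk.le) (T.mono k hk).le (chain_b T hk))]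
    rw [T.x0, T.xn]
  have hsplit2 : ∑ k ∈ Finset.range T.n, ∫ x in T.x k..T.x (k+1), hi (F (mkI x x))
      = ∫ x in a..b, hi (F (mkI x x)) := by
    rw [intervalIntegral.sum_integral_adjacent_intervals
      (fun k hk => hfrInt _ _ (chain_a T hk.le) (T.mono k hk).le (chain_b T hk))]
    rw [T.x0, T.xn]
  constructor
  · rw [fst_mooreSum, ← hsplit1]
    apply Finset.sum_le_sum
    intro k hk
    have hk' := Finset.mem_range.mp hk
    have hxk : T.x k ≤ T.x (k+1) := (T.mono k hk').le
    have ha' : a ≤ T.x k := chain_a T hk'.le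
    have hb' : T.x (k+1) ≤ b := chain_b T hk'
    have hconst : (T.x (k+1) - T.x k) * lo (F (mkI (T.x k) (T.x (k+1))))
        = ∫ _ in T.x k..T.x (k+1), lo (F (mkI (T.x k) (T.x (k+1)))) := by
      rw [intervalIntegral.integral_const, smul_eq_mul]
    rw [hconst]
    apply intervalIntegral.integral_mono_on hxk intervalIntegrable_const
      (hflInt _ _ ha' hxk hb')
    intro x hx
    exact (hmono _ _ x ha' hx.1 hx.2 hb').1
  · rw [snd_mooreSum, ← hsplit2]
    apply Finset.sum_le_sum
    intro k hk
    have hk' := Finset.mem_range.mp hk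
    have hxk : T.x k ≤ T.x (k+1) := (T.mono k hk').le
    have ha' : a ≤ T.x k := chain_a T hk'.le
    have hb' : T.x (k+1) ≤ b := chain_b T hk'
    have hconst : (T.x (k+1) - T.x k) * hi (F (mkI (T.x k) (T.x (k+1))))
        = ∫ _ in T.x k..T.x (k+1), hi (F (mkI (T.x k) (T.x (k+1)))) := by
      rw [intervalIntegral.integral_const, smul_eq_mul]
    rw [hconst]
    apply intervalIntegral.integral_mono_on hxk (hfrInt _ _ ha' hxk hb')
      intervalIntegrable_const
    intro x hx
    exact (hmono _ _ x ha' hx.1 hx.2 hb').2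
end MY
namespace MY
open IR MeasureTheory

lemma compactS (a b : ℝ) : IsCompact {X : IR | a ≤ lo X ∧ hi X ≤ b} := by
  rw [Topology.IsEmbedding.isCompact_iff Topology.IsEmbedding.subtypeVal]
  have hval : Subtype.val '' {X : IR | a ≤ lo X ∧ hi X ≤ b}
      = Set.Icc ((a, a) : ℝ × ℝ) (b, b) ∩ {p : ℝ × ℝ | p.1 ≤ p.2} := by
    ext p
    simp only [Set.mem_image, Set.mem_inter_iff, Set.mem_Icc, Set.mem_setOf_eq,
      Prod.le_def, lo, hi]
    constructor
    · rintro ⟨⟨⟨u, v⟩, huv⟩, ⟨h1, h2⟩, rfl⟩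
      exact ⟨⟨⟨h1, h1.trans huv⟩, ⟨huv.trans h2, h2⟩⟩, huv⟩
    · rintro ⟨⟨⟨h1, _⟩, ⟨_, h2⟩⟩, huv⟩
      exact ⟨⟨p, huv⟩, ⟨h1, h2⟩, rfl⟩
  rw [hval]
  exact isCompact_Icc.inter_right (isClosed_le continuous_fst continuous_snd)

lemma exists_chain {a b : ℝ} (hab : a < b) (F : IR → IR)
    (hFc : ContinuousOn F {X : IR | a ≤ lo X ∧ hi X ≤ b})
    (ε : ℝ) (hε : 0 < ε) :
    ∃ T : RChain a b,
      (∫ x in a..b, lo (F (mkI x x))) ≤ (mooreSum F T).1 + ε ∧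
      (mooreSum F T).2 ≤ (∫ x in a..b, hi (F (mkI x x))) + ε := by
  obtain ⟨hflC, hfrC⟩ := cont_fl F hFc
  have hflInt : ∀ u v : ℝ, a ≤ u → u ≤ v → v ≤ b →
      IntervalIntegrable (fun x : ℝ => lo (F (mkI x x))) volume u v :=
    fun u v hau huv hvb =>
      ContinuousOn.intervalIntegrable_of_Icc huv (hflC.mono (Set.Icc_subset_Icc hau hvb))
  have hfrInt : ∀ u v : ℝ, a ≤ u → u ≤ v → v ≤ b →
      IntervalIntegrable (fun x : ℝ => hi (F (mkI x x))) volume u v :=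
    fun u v hau huv hvb =>
      ContinuousOn.intervalIntegrable_of_Icc huv (hfrC.mono (Set.Icc_subset_Icc hau hvb))
  -- uniform continuity
  set ε' : ℝ := ε / (b - a) with hε'def
  have hba : (0:ℝ) < b - a := sub_pos.mpr hab
  have hε' : 0 < ε' := div_pos hε hba
  obtain ⟨δ, hδ, hδ'⟩ := Metric.uniformContinuousOn_iff.mp
    ((compactS a b).uniformContinuousOn_of_continuous hFc) ε' hε'
  -- uniform partition
  obtain ⟨n, hn⟩ := exists_nat_gt ((b - a) / δ)
  have hn0' : (0:ℝ) < (b - a) / δ := div_pos hba hδ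
  have hn0 : (0:ℝ) < n := hn0'.trans hn
  have hnpos : 0 < n := by exact_mod_cast hn0
  set c : ℝ := (b - a) / n with hcdef
  have hc : 0 < c := div_pos hba hn0
  have hcδ : c < δ := by
    rw [hcdef, div_lt_iff₀ hn0]
    have := (div_lt_iff₀ hδ).mp hn
    linarith
  set xf : ℕ → ℝ := fun i => a + i * c with hxfdef
  have hx0 : xf 0 = a := by simp [hxfdef]
  have hxn : xf n = b := by
    simp only [hxfdef, hcdef]
    field_simp
    ring
  have hxm : ∀ i, i < n → xf i < xf (i + 1) := by
    intro i _
    simp only [hxfdef]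
    push_cast
    nlinarith [hc]
  have hstep : ∀ k : ℕ, xf (k + 1) - xf k = c := by
    intro k; simp only [hxfdef]; push_cast; ring
  set T : RChain a b := ⟨n, hnpos, xf, hx0, hxn, hxm⟩ with hTdef
  have hxa : ∀ k : ℕ, k ≤ n → a ≤ xf k := fun k hk => chain_a T hk
  have hxb : ∀ k : ℕ, k ≤ n → xf k ≤ b := fun k hk => chain_b T hk
  -- key pointwise estimate
  have hest : ∀ k, k < n → ∀ x ∈ Set.Icc (xf k) (xf (k + 1)),
      lo (F (mkI x x)) ≤ lo (F (mkI (xf k) (xf (k + 1)))) + ε' ∧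
      hi (F (mkI (xf k) (xf (k + 1)))) - ε' ≤ hi (F (mkI x x)) := by
    intro k hk x hx
    have hk1 : xf k ≤ xf (k + 1) := (hxm k hk).le
    have hak : a ≤ xf k := hxa k hk.le
    have hbk : xf (k + 1) ≤ b := hxb (k + 1) hk
    have haxx : a ≤ x := hak.trans hx.1
    have hxxb : x ≤ b := hx.2.trans hbk
    have hmemΔ : mkI (xf k) (xf (k + 1)) ∈ {X : IR | a ≤ lo X ∧ hi X ≤ b} :=
      ⟨by rw [lo_mkI hk1]; exact hak, by rw [hi_mkI hk1]; exact hbk⟩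
    have hmemx : mkI x x ∈ {X : IR | a ≤ lo X ∧ hi X ≤ b} :=
      ⟨by rw [lo_mkI le_rfl]; exact haxx, by rw [hi_mkI le_rfl]; exact hxxb⟩
    have hstepk := hstep k
    have hdist : dist (mkI (xf k) (xf (k + 1))) (mkI x x) < δ := by
      rw [Subtype.dist_eq, mkI_val hk1, mkI_val (le_refl x), Prod.dist_eq]
      have hx1 := hx.1
      have hx2 := hx.2
      refine max_lt ?_ ?_
      · rw [Real.dist_eq, abs_lt]
        exact ⟨by linarith, by linarith⟩
      · rw [Real.dist_eq, abs_lt]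
        exact ⟨by linarith, by linarith⟩
    have hFdist := hδ' _ hmemΔ _ hmemx hdist
    have h1 : dist (lo (F (mkI (xf k) (xf (k + 1))))) (lo (F (mkI x x)))
        ≤ dist (F (mkI (xf k) (xf (k + 1)))) (F (mkI x x)) := by
      rw [Subtype.dist_eq, Prod.dist_eq]
      exact le_max_left _ _
    have h2 : dist (hi (F (mkI (xf k) (xf (k + 1))))) (hi (F (mkI x x)))
        ≤ dist (F (mkI (xf k) (xf (k + 1)))) (F (mkI x x)) := by
      rw [Subtype.dist_eq, Prod.dist_eq]
      exact le_max_right _ _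
    rw [Real.dist_eq] at h1 h2
    have e1 := abs_lt.mp (h1.trans_lt hFdist)
    have e2 := abs_lt.mp (h2.trans_lt hFdist)
    exact ⟨by linarith [e1.1], by linarith [e2.2]⟩
  refine ⟨T, ?_, ?_⟩
  · -- lower
    have hmsT : (mooreSum F T).1 = ∑ k ∈ Finset.range n,
        (xf (k + 1) - xf k) * lo (F (mkI (xf k) (xf (k + 1)))) := fst_mooreSum F T
    have hsplit : ∑ k ∈ Finset.range n, ∫ x in xf k..xf (k + 1), lo (F (mkI x x))
        = ∫ x in a..b, lo (F (mkI x x)) := by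
      rw [intervalIntegral.sum_integral_adjacent_intervals
        (fun k hk => hflInt _ _ (hxa k hk.le) (hxm k hk).le (hxb (k + 1) hk))]
      rw [hx0, hxn]
    rw [← hsplit, hmsT]
    have hsum : ∀ k ∈ Finset.range n, ∫ x in xf k..xf (k + 1), lo (F (mkI x x))
        ≤ (xf (k + 1) - xf k) * lo (F (mkI (xf k) (xf (k + 1)))) + ε' * c := by
      intro k hk
      have hk' := Finset.mem_range.mp hk
      have hk1 : xf k ≤ xf (k + 1) := (hxm k hk').le
      have hbound : ∫ x in xf k..xf (k + 1), lo (F (mkI x x))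
          ≤ ∫ _ in xf k..xf (k + 1), (lo (F (mkI (xf k) (xf (k + 1)))) + ε') := by
        apply intervalIntegral.integral_mono_on hk1
          (hflInt _ _ (hxa k hk'.le) hk1 (hxb (k + 1) hk'))
          intervalIntegrable_const
        intro x hx
        exact (hest k hk' x hx).1
      rw [intervalIntegral.integral_const, smul_eq_mul, hstep k] at hbound
      calc ∫ x in xf k..xf (k + 1), lo (F (mkI x x))
          ≤ c * (lo (F (mkI (xf k) (xf (k + 1)))) + ε') := hbound
        _ = (xf (k + 1) - xf k) * lo (F (mkI (xf k) (xf (k + 1)))) + ε' * c := by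
            rw [hstep k]; ring
    calc ∑ k ∈ Finset.range n, ∫ x in xf k..xf (k + 1), lo (F (mkI x x))
        ≤ ∑ k ∈ Finset.range n,
            ((xf (k + 1) - xf k) * lo (F (mkI (xf k) (xf (k + 1)))) + ε' * c) :=
          Finset.sum_le_sum hsum
      _ = (∑ k ∈ Finset.range n,
            (xf (k + 1) - xf k) * lo (F (mkI (xf k) (xf (k + 1))))) + n * (ε' * c) := by
          rw [Finset.sum_add_distrib, Finset.sum_const, Finset.card_range, nsmul_eq_mul]
      _ ≤ (∑ k ∈ Finset.range n,
            (xf (k + 1) - xf k) * lo (F (mkI (xf k) (xf (k + 1))))) + ε := by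
          have : (n : ℝ) * (ε' * c) = ε := by
            rw [hcdef, hε'def]
            field_simp
          rw [this]
  · -- upper
    have hmsT : (mooreSum F T).2 = ∑ k ∈ Finset.range n,
        (xf (k + 1) - xf k) * hi (F (mkI (xf k) (xf (k + 1)))) := snd_mooreSum F T
    have hsplit : ∑ k ∈ Finset.range n, ∫ x in xf k..xf (k + 1), hi (F (mkI x x))
        = ∫ x in a..b, hi (F (mkI x x)) := by
      rw [intervalIntegral.sum_integral_adjacent_intervals
        (fun k hk => hfrInt _ _ (hxa k hk.le) (hxm k hk).le (hxb (k + 1) hk))]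
      rw [hx0, hxn]
    rw [← hsplit, hmsT]
    have hsum : ∀ k ∈ Finset.range n,
        (xf (k + 1) - xf k) * hi (F (mkI (xf k) (xf (k + 1))))
          ≤ (∫ x in xf k..xf (k + 1), hi (F (mkI x x))) + ε' * c := by
      intro k hk
      have hk' := Finset.mem_range.mp hk
      have hk1 : xf k ≤ xf (k + 1) := (hxm k hk').le
      have hbound : ∫ _ in xf k..xf (k + 1), (hi (F (mkI (xf k) (xf (k + 1)))) - ε')
          ≤ ∫ x in xf k..xf (k + 1), hi (F (mkI x x)) := by
        apply intervalIntegral.integral_mono_on hk1 intervalIntegrable_const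
          (hfrInt _ _ (hxa k hk'.le) hk1 (hxb (k + 1) hk'))
        intro x hx
        exact (hest k hk' x hx).2
      rw [intervalIntegral.integral_const, smul_eq_mul, hstep k] at hbound
      have : (xf (k + 1) - xf k) * hi (F (mkI (xf k) (xf (k + 1))))
          = c * (hi (F (mkI (xf k) (xf (k + 1)))) - ε') + ε' * c := by
        rw [hstep k]; ring
      rw [this]
      linarith
    calc ∑ k ∈ Finset.range n,
          (xf (k + 1) - xf k) * hi (F (mkI (xf k) (xf (k + 1))))
        ≤ ∑ k ∈ Finset.range n,
            ((∫ x in xf k..xf (k + 1), hi (F (mkI x x))) + ε' * c) :=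
          Finset.sum_le_sum hsum
      _ = (∑ k ∈ Finset.range n, ∫ x in xf k..xf (k + 1), hi (F (mkI x x)))
            + n * (ε' * c) := by
          rw [Finset.sum_add_distrib, Finset.sum_const, Finset.card_range, nsmul_eq_mul]
      _ ≤ (∑ k ∈ Finset.range n, ∫ x in xf k..xf (k + 1), hi (F (mkI x x))) + ε := by
          have : (n : ℝ) * (ε' * c) = ε := by
            rw [hcdef, hε'def]
            field_simp
          rw [this]

end MY

open IR in
/-- **Moore–Yang characterization theorem.**  Let `a < b` and let
`F : {X ∈ 𝕀ℝ : X ⊆ [a,b]} → 𝕀ℝ` be continuous w.r.t. the Moore metric and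
inclusion monotonic.  Then the intersection of the sets `Σ(F,T) ⊆ ℝ` over all
partitions `T` of `[a,b]` is exactly `[∫_a^b f_l, ∫_a^b f_r]`, where
`f_l(x) = π₁F([x,x])` and `f_r(x) = π₂F([x,x])`. -/
theorem IR.mooreYang_characterization (a b : ℝ) (hab : a < b) (F : IR → IR)
    (hFc : ContinuousOn F {X : IR | a ≤ lo X ∧ hi X ≤ b})
    (hFm : ∀ X Y : IR, a ≤ lo X → hi X ≤ b → a ≤ lo Y → hi Y ≤ b →
      lo Y ≤ lo X → hi X ≤ hi Y → lo (F Y) ≤ lo (F X) ∧ hi (F X) ≤ hi (F Y)) :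
    (⋂ T : RChain a b, Set.Icc (mooreSum F T).1 (mooreSum F T).2) =
      Set.Icc (∫ x in a..b, lo (F (mkI x x))) (∫ x in a..b, hi (F (mkI x x))) := by
  apply Set.Subset.antisymm
  · intro y hy
    simp only [Set.mem_iInter, Set.mem_Icc] at hy
    simp only [Set.mem_Icc]
    constructor
    · refine le_of_forall_pos_le_add fun ε hε => ?_
      obtain ⟨T, h1, _⟩ := MY.exists_chain hab F hFc ε hε
      exact h1.trans ((add_le_add_iff_right ε).mpr (hy T).1)
    · refine le_of_forall_pos_le_add fun ε hε => ?_
      obtain ⟨T, _, h2⟩ := MY.exists_chain hab F hFc ε hε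
      exact (hy T).2.trans h2
  · intro y hy
    simp only [Set.mem_Icc] at hy
    simp only [Set.mem_iInter, Set.mem_Icc]
    intro T
    obtain ⟨h1, h2⟩ := MY.bounds hab.le F hFc hFm T
    exact ⟨h1.trans hy.1, hy.2.trans h2⟩
end
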